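/- arXiv:1912.09868 — 2 statements merged into one kernel-verified Lean document; each statement's English description precedes it below -/
import Mathlib

section
/- There exists a continuous function u : K → ℝ such that a_n(u) = n for every integer n ≥ 1. -/
open Set

namespace SG

/-- The three vertices of the Sierpiński gasket. -/
noncomputable def p : Fin 3 → ℝ × ℝ := ![(0, 0), (1, 0), (1 / 2, Real.sqrt 3 / 2)]

/-- The three contractions `f_i(x) = (x + p_i)/2`. -/
noncomputable def f (i : Fin 3) (x : ℝ × ℝ) : ℝ × ℝ :=
  ((x.1 + (p i).1) / 2, (x.2 + (p i).2) / 2)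

/-- The vertex sets `V₀ = {p₀,p₁,p₂}`, `V_{n+1} = ⋃ f_i(V_n)`. -/
noncomputable def V : ℕ → Set (ℝ × ℝ)
  | 0 => Set.range p
  | n + 1 => ⋃ i : Fin 3, f i '' V n

/-- The Sierpiński gasket: the closure of `V_* = ⋃_n V_n`. -/
noncomputable def K : Set (ℝ × ℝ) := closure (⋃ n, V n)

/-- For a word `w = w₁…w_n`, the composition `f_{w₁} ∘ … ∘ f_{w_n}`. -/
noncomputable def fw {n : ℕ} (w : Fin n → Fin 3) (x : ℝ × ℝ) : ℝ × ℝ :=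
  (List.ofFn w).foldr f x

/-- The graph energy
`a_n(u) = (5/3)^n Σ_{w ∈ W_n} Σ_{{p,q} ⊆ V_w, p ≠ q} (u(p) − u(q))²`
(the inner sum over unordered pairs is written as half of the ordered sum). -/
noncomputable def a (n : ℕ) (u : ℝ × ℝ → ℝ) : ℝ :=
  (5 / 3) ^ n * ∑ w : Fin n → Fin 3,
    (∑ i : Fin 3, ∑ j : Fin 3, (u (fw w (p i)) - u (fw w (p j))) ^ 2) / 2

end SG
namespace SGP2

noncomputable def rt : ℝ := Real.sqrt (3/5)
lemma rt_nonneg : 0 ≤ rt := Real.sqrt_nonneg _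
lemma rt_sq : rt ^ 2 = 3/5 := Real.sq_sqrt (by norm_num)
lemma rt_le_one : rt ≤ 1 := by nlinarith [rt_nonneg, rt_sq]
lemma rt_ge : 13/20 ≤ rt := by nlinarith [rt_nonneg, rt_sq]

noncomputable def sq2 : ℝ := Real.sqrt 2
lemma sq2_nonneg : 0 ≤ sq2 := Real.sqrt_nonneg _
lemma sq2_sq : sq2 ^ 2 = 2 := Real.sq_sqrt (by norm_num)
lemma sq2_ge_one : 1 ≤ sq2 := by nlinarith [sq2_nonneg, sq2_sq]
lemma sq2_pos : 0 < sq2 := lt_of_lt_of_le one_pos sq2_ge_one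
lemma sq2_ne : sq2 ≠ 0 := ne_of_gt sq2_pos
lemma rt_sq2 : 1 ≤ rt * sq2 := by nlinarith [rt_nonneg, rt_sq, sq2_sq, sq2_pos]

noncomputable def sd : ℝ := Real.sqrt (6*rt - 18/5)
lemma sd_nonneg : 0 ≤ sd := Real.sqrt_nonneg _
lemma sd_sq : sd ^ 2 = 6*rt - 18/5 := Real.sq_sqrt (by nlinarith [rt_ge])

noncomputable def tc : ℝ := (1 + rt - sd)/2
lemma tc_nonneg : 0 ≤ tc := by
  have h : sd ≤ 1 + rt := by nlinarith [sd_nonneg, sd_sq, rt_nonneg, rt_sq]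
  simp only [tc]; linarith
lemma tc_le_rt : tc ≤ rt := by
  have h : 1 - rt ≤ sd := by nlinarith [sd_nonneg, sd_sq, rt_le_one, rt_ge]
  simp only [tc]; linarith
lemma tc_le_one : tc ≤ 1 := le_trans tc_le_rt rt_le_one
lemma tid : (1-rt)^2 + (1-tc)^2 + (tc-rt)^2 = rt^2 := by
  have h1 := sd_sq
  have h2 := rt_sq
  simp only [tc]
  linear_combination (1/2) * h1 + (1/2) * h2

noncomputable def vs : ℕ → ℝ
  | 0 => rt / sq2
  | (j+1) => rt^(j+1) / sq2

noncomputable def ws : ℕ → ℝ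
  | 0 => rt / sq2
  | (j+1) => tc * rt^(j+1) / sq2

lemma vs_nonneg (j : ℕ) : 0 ≤ vs j := by
  cases j with
  | zero => exact div_nonneg rt_nonneg sq2_nonneg
  | succ n => exact div_nonneg (pow_nonneg rt_nonneg _) sq2_nonneg
lemma ws_nonneg (j : ℕ) : 0 ≤ ws j := by
  cases j with
  | zero => exact div_nonneg rt_nonneg sq2_nonneg
  | succ n => exact div_nonneg (mul_nonneg tc_nonneg (pow_nonneg rt_nonneg _)) sq2_nonneg
lemma vs_le (j : ℕ) : vs j ≤ rt^j := by
  cases j with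
  | zero =>
    simp only [vs, pow_zero]
    rw [div_le_one sq2_pos]
    exact le_trans rt_le_one sq2_ge_one
  | succ n =>
    simp only [vs]
    rw [div_le_iff₀ sq2_pos]
    nlinarith [pow_nonneg rt_nonneg (n+1), sq2_ge_one]
lemma ws_le (j : ℕ) : ws j ≤ rt^j := by
  cases j with
  | zero => exact vs_le 0
  | succ n =>
    simp only [ws]
    rw [div_le_iff₀ sq2_pos]
    nlinarith [pow_nonneg rt_nonneg (n+1), sq2_ge_one, tc_le_one, tc_nonneg]
lemma vs_succ_le (j : ℕ) : vs (j+1) ≤ rt^j := by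
  calc vs (j+1) ≤ rt^(j+1) := vs_le (j+1)
    _ ≤ rt^j := by
        rw [pow_succ]
        nlinarith [pow_nonneg rt_nonneg j, rt_le_one, rt_nonneg]
lemma vs_one : vs 1 = vs 0 := by simp [vs]
lemma ws_zero : ws 0 = vs 0 := by simp [ws, vs]

inductive St where
  | harm (A B C : ℝ) : St
  | spine (j : ℕ) : St

open St

noncomputable def val : St → Fin 3 → ℝ
  | harm A B C => ![A, B, C]
  | spine j => ![0, vs j, vs j]

noncomputable def step : St → Fin 3 → St
  | harm A B C => ![harm A ((2*A+2*B+C)/5) ((2*A+2*C+B)/5),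
                    harm ((2*A+2*B+C)/5) B ((2*B+2*C+A)/5),
                    harm ((2*A+2*C+B)/5) ((2*B+2*C+A)/5) C]
  | spine j => ![spine (j+1), harm (vs (j+1)) (vs j) (ws j), harm (vs (j+1)) (ws j) (vs j)]

noncomputable def Mb : St → ℝ
  | harm A B C => |A-B| + |B-C| + |C-A|
  | spine j => 2 * rt^j

lemma Mb_nonneg (s : St) : 0 ≤ Mb s := by
  cases s with
  | harm A B C => simp only [Mb]; positivity
  | spine j => simp only [Mb]; exact mul_nonneg (by norm_num) (pow_nonneg rt_nonneg j)

-- consistency axioms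
lemma hA1 (s : St) (i : Fin 3) : val (step s i) i = val s i := by
  cases s with
  | harm A B C => fin_cases i <;> simp [val, step]
  | spine j => fin_cases i <;> simp [val, step]

lemma hA4 (s : St) : val (step s 0) 1 = val (step s 1) 0 := by
  cases s <;> simp [val, step]
lemma hA5 (s : St) : val (step s 0) 2 = val (step s 2) 0 := by
  cases s <;> simp [val, step]
lemma hA6 (s : St) : val (step s 1) 2 = val (step s 2) 1 := by
  cases s <;> simp [val, step]

-- deviation bound
lemma abs_sub_avg {x y z b : ℝ} (hx : |x| ≤ b) (hy : |y| ≤ b) (hz : |z| ≤ b) :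
    |x - (y + z)/2| ≤ 2*b := by
  have h1 := le_abs_self x
  have h2 := neg_abs_le x
  have h3 := le_abs_self y
  have h4 := neg_abs_le y
  have h5 := le_abs_self z
  have h6 := neg_abs_le z
  rw [abs_le]; constructor <;> linarith

lemma ws_succ_le (j : ℕ) : ws (j+1) ≤ rt^j := by
  calc ws (j+1) ≤ rt^(j+1) := ws_le (j+1)
    _ ≤ rt^j := by
        rw [pow_succ]
        nlinarith [pow_nonneg rt_nonneg j, rt_le_one, rt_nonneg]

lemma val_spine_bound (j : ℕ) (k : Fin 3) : |val (spine j) k| ≤ rt^j := by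
  fin_cases k <;> simp [val] <;>
    first
    | exact pow_nonneg rt_nonneg j
    | (rw [abs_of_nonneg (vs_nonneg j)]; exact vs_le j)

lemma val_spine_child_bound (j : ℕ) (i k : Fin 3) : |val (step (spine j) i) k| ≤ rt^j := by
  fin_cases i <;> fin_cases k <;> simp [step, val] <;>
    first
    | exact pow_nonneg rt_nonneg j
    | (rw [abs_of_nonneg (vs_nonneg _)]; first | exact vs_le _ | exact vs_succ_le _)
    | (rw [abs_of_nonneg (ws_nonneg _)]; exact ws_le _)

lemma hdev (s : St) (i k : Fin 3) :
    |val (step s i) k - (val s i + val s k)/2| ≤ Mb s := by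
  cases s with
  | spine j =>
    simp only [Mb]
    exact abs_sub_avg (val_spine_child_bound j i k) (val_spine_bound j i) (val_spine_bound j k)
  | harm A B C =>
    have u1 := le_abs_self (A-B); have u2 := neg_abs_le (A-B)
    have v1 := le_abs_self (B-C); have v2 := neg_abs_le (B-C)
    have w1 := le_abs_self (C-A); have w2 := neg_abs_le (C-A)
    fin_cases i <;> fin_cases k <;> simp [step, val, Mb] <;>
      first
      | positivity
      | (rw [abs_le]; constructor <;> linarith)


open St

lemma rt_ge35 : (3:ℝ)/5 ≤ rt := by nlinarith [rt_nonneg, rt_sq]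

lemma habs (a b c u v : ℝ) (h : a = (b*u + c*v)/5) (hb : 0 ≤ b) (hc : 0 ≤ c) :
    |a| ≤ (b*|u| + c*|v|)/5 := by
  rw [h, abs_div, abs_of_nonneg (by norm_num : (0:ℝ) ≤ 5)]
  have h1 : |b*u + c*v| ≤ |b*u| + |c*v| := abs_add_le _ _
  rw [abs_mul, abs_mul, abs_of_nonneg hb, abs_of_nonneg hc] at h1
  linarith

lemma vs_anti (n : ℕ) : vs (n+2) ≤ vs (n+1) := by
  simp only [vs]
  exact (div_le_div_iff_of_pos_right sq2_pos).mpr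
    (pow_le_pow_of_le_one rt_nonneg rt_le_one (by omega))

lemma ws_le_vs (n : ℕ) : ws (n+1) ≤ vs (n+1) := by
  simp only [ws, vs]
  apply (div_le_div_iff_of_pos_right sq2_pos).mpr
  nlinarith [pow_nonneg rt_nonneg (n+1), tc_le_one, tc_nonneg]

lemma ws_le_vs2 (n : ℕ) : ws (n+1) ≤ vs (n+2) := by
  simp only [ws, vs]
  apply (div_le_div_iff_of_pos_right sq2_pos).mpr
  nlinarith [pow_succ rt (n+1), mul_le_mul_of_nonneg_right tc_le_rt (pow_nonneg rt_nonneg (n+1))]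

lemma sideMb (n : ℕ) :
    (vs (n+1) - vs (n+2)) + (vs (n+1) - ws (n+1)) + (vs (n+2) - ws (n+1)) ≤ rt * (2 * rt^(n+1)) := by
  simp only [ws, vs]
  have hq0 : 0 ≤ rt^(n+1)/sq2 := div_nonneg (pow_nonneg rt_nonneg _) sq2_nonneg
  have hq : rt^(n+1)/sq2 * sq2 = rt^(n+1) := div_mul_cancel₀ _ sq2_ne
  have hw : tc * rt^(n+1)/sq2 = tc * (rt^(n+1)/sq2) := by ring
  have h2 : rt^(n+2)/sq2 = rt * (rt^(n+1)/sq2) := by rw [pow_succ]; ring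
  rw [hw, h2]
  have hq2 : rt * (rt^(n+1)/sq2 * sq2) = rt * rt^(n+1) := by rw [hq]
  nlinarith [mul_nonneg (sub_nonneg.2 rt_sq2) hq0, mul_nonneg tc_nonneg hq0, hq2]

lemma hcontr (s : St) (i : Fin 3) : Mb (step s i) ≤ rt * Mb s := by
  cases s with
  | spine j =>
    fin_cases i
    · show Mb (spine (j+1)) ≤ rt * Mb (spine j)
      simp only [Mb]
      exact le_of_eq (by rw [pow_succ]; ring)
    · show Mb (harm (vs (j+1)) (vs j) (ws j)) ≤ rt * Mb (spine j)
      simp only [Mb]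
      cases j with
      | zero =>
        rw [vs_one, ws_zero]
        simp
        nlinarith [rt_nonneg]
      | succ n =>
        rw [abs_of_nonpos (by linarith [vs_anti n]), abs_of_nonneg (by linarith [ws_le_vs n]),
          abs_of_nonpos (by linarith [ws_le_vs2 n])]
        have := sideMb n
        linarith
    · show Mb (harm (vs (j+1)) (ws j) (vs j)) ≤ rt * Mb (spine j)
      simp only [Mb]
      cases j with
      | zero =>
        rw [vs_one, ws_zero]
        simp
        nlinarith [rt_nonneg]
      | succ n =>
        rw [abs_of_nonneg (by linarith [ws_le_vs2 n]), abs_of_nonpos (by linarith [ws_le_vs n]),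
          abs_of_nonneg (by linarith [vs_anti n])]
        have := sideMb n
        linarith
  | harm A B C =>
    have n1 := abs_nonneg (A-B); have n2 := abs_nonneg (B-C); have n3 := abs_nonneg (C-A)
    have hr := rt_ge35
    have hmul := mul_le_mul_of_nonneg_right hr (add_nonneg (add_nonneg n1 n2) n3)
    fin_cases i
    · show Mb (harm A ((2*A+2*B+C)/5) ((2*A+2*C+B)/5)) ≤ rt * Mb (harm A B C)
      simp only [Mb]
      have h1 := habs (A - (2*A+2*B+C)/5) 2 1 (A-B) (-(C-A)) (by ring) (by norm_num) (by norm_num)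
      have h2 := habs ((2*A+2*B+C)/5 - (2*A+2*C+B)/5) 1 0 (B-C) 0 (by ring) (by norm_num) (by norm_num)
      have h3 := habs ((2*A+2*C+B)/5 - A) 2 1 (C-A) (-(A-B)) (by ring) (by norm_num) (by norm_num)
      rw [abs_neg] at h1 h3
      simp only [abs_zero] at h2
      linarith
    · show Mb (harm ((2*A+2*B+C)/5) B ((2*B+2*C+A)/5)) ≤ rt * Mb (harm A B C)
      simp only [Mb]
      have h1 := habs ((2*A+2*B+C)/5 - B) 2 1 (A-B) (-(B-C)) (by ring) (by norm_num) (by norm_num)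
      have h2 := habs (B - (2*B+2*C+A)/5) 2 1 (B-C) (-(A-B)) (by ring) (by norm_num) (by norm_num)
      have h3 := habs ((2*B+2*C+A)/5 - (2*A+2*B+C)/5) 1 0 (C-A) 0 (by ring) (by norm_num) (by norm_num)
      rw [abs_neg] at h1 h2
      simp only [abs_zero] at h3
      linarith
    · show Mb (harm ((2*A+2*C+B)/5) ((2*B+2*C+A)/5) C) ≤ rt * Mb (harm A B C)
      simp only [Mb]
      have h1 := habs ((2*A+2*C+B)/5 - (2*B+2*C+A)/5) 1 0 (A-B) 0 (by ring) (by norm_num) (by norm_num)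
      have h2 := habs ((2*B+2*C+A)/5 - C) 2 1 (B-C) (-(C-A)) (by ring) (by norm_num) (by norm_num)
      have h3 := habs (C - (2*A+2*C+B)/5) 2 1 (C-A) (-(B-C)) (by ring) (by norm_num) (by norm_num)
      rw [abs_neg] at h2 h3
      simp only [abs_zero] at h1
      linarith

noncomputable def E3 (g : Fin 3 → ℝ) : ℝ := (g 0 - g 1)^2 + (g 1 - g 2)^2 + (g 2 - g 0)^2

lemma deltaY (A B C : ℝ) :
    E3 (val (step (harm A B C) 0)) + E3 (val (step (harm A B C) 1))
      + E3 (val (step (harm A B C) 2)) = 3/5 * E3 (val (harm A B C)) := by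
  show E3 (val (harm A ((2*A+2*B+C)/5) ((2*A+2*C+B)/5)))
      + E3 (val (harm ((2*A+2*B+C)/5) B ((2*B+2*C+A)/5)))
      + E3 (val (harm ((2*A+2*C+B)/5) ((2*B+2*C+A)/5) C)) = 3/5 * E3 (val (harm A B C))
  simp only [E3, val, Matrix.cons_val_zero, Matrix.cons_val_one, Matrix.head_cons,
    Matrix.cons_val_two, Matrix.tail_cons]
  ring

lemma E3_spine (j : ℕ) : E3 (val (spine j)) = 2 * (vs j)^2 := by
  simp only [E3, val, Matrix.cons_val_zero, Matrix.cons_val_one, Matrix.head_cons,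
    Matrix.cons_val_two, Matrix.tail_cons]
  ring

lemma vs_sq (n : ℕ) : (vs (n+1))^2 = (3/5)^(n+1) / 2 := by
  simp only [vs]
  rw [div_pow, sq2_sq, ← pow_mul, mul_comm (n+1) 2, pow_mul, rt_sq]

lemma E3_spine_val (n : ℕ) : E3 (val (spine (n+1))) = (3/5)^(n+1) := by
  rw [E3_spine, vs_sq]; ring

lemma E3_side_core (n : ℕ) :
    (vs (n+2) - vs (n+1))^2 + (vs (n+1) - ws (n+1))^2 + (ws (n+1) - vs (n+2))^2
      = (3/5)^(n+2) / 2 := by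
  have key : (vs (n+2) - vs (n+1))^2 + (vs (n+1) - ws (n+1))^2 + (ws (n+1) - vs (n+2))^2
      = (rt^(n+1))^2 / 2 * ((1-rt)^2 + (1-tc)^2 + (tc-rt)^2) := by
    have e : ∀ a b : ℝ, (a/sq2 - b/sq2)^2 = (a-b)^2/2 := by
      intro a b; rw [div_sub_div_same, div_pow, sq2_sq]
    simp only [vs, ws]
    rw [e, e, e, pow_succ]
    ring
  rw [key, tid, ← pow_mul, mul_comm (n+1) 2, pow_mul, rt_sq]
  have : ((3:ℝ)/5)^(n+1) * (3/5) = (3/5)^(n+2) := by rw [← pow_succ]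
  nlinarith [this]

lemma E3_side1 (n : ℕ) : E3 (val (step (spine (n+1)) 1)) = (3/5)^(n+2) / 2 := by
  show E3 (val (harm (vs (n+2)) (vs (n+1)) (ws (n+1)))) = (3/5)^(n+2) / 2
  simp only [E3, val, Matrix.cons_val_zero, Matrix.cons_val_one, Matrix.head_cons,
    Matrix.cons_val_two, Matrix.tail_cons]
  have := E3_side_core n
  nlinarith [this]

lemma E3_side2 (n : ℕ) : E3 (val (step (spine (n+1)) 2)) = (3/5)^(n+2) / 2 := by
  show E3 (val (harm (vs (n+2)) (ws (n+1)) (vs (n+1)))) = (3/5)^(n+2) / 2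
  simp only [E3, val, Matrix.cons_val_zero, Matrix.cons_val_one, Matrix.head_cons,
    Matrix.cons_val_two, Matrix.tail_cons]
  have := E3_side_core n
  nlinarith [this]

lemma E3_side1_zero : E3 (val (step (spine 0) 1)) = 0 := by
  show E3 (val (harm (vs 1) (vs 0) (ws 0))) = 0
  rw [vs_one, ws_zero]
  simp only [E3, val, Matrix.cons_val_zero, Matrix.cons_val_one, Matrix.head_cons,
    Matrix.cons_val_two, Matrix.tail_cons]
  ring

lemma E3_side2_zero : E3 (val (step (spine 0) 2)) = 0 := by
  show E3 (val (harm (vs 1) (ws 0) (vs 0))) = 0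
  rw [vs_one, ws_zero]
  simp only [E3, val, Matrix.cons_val_zero, Matrix.cons_val_one, Matrix.head_cons,
    Matrix.cons_val_two, Matrix.tail_cons]
  ring

end SGP2



namespace SGP

open SG

noncomputable def s3 : ℝ := Real.sqrt 3

lemma s3_pos : 0 < s3 := Real.sqrt_pos.2 (by norm_num)
lemma s3_sq : s3 ^ 2 = 3 := Real.sq_sqrt (by norm_num)
lemma s3_lt : 1 < s3 ∧ s3 < 2 := by
  constructor
  · nlinarith [s3_pos, s3_sq]
  · nlinarith [s3_pos, s3_sq]

lemma p0_def : p 0 = (0, 0) := rfl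
lemma p1_def : p 1 = (1, 0) := rfl
lemma p2_def : p 2 = (1/2, s3/2) := rfl

/-- The big closed triangle. -/
def T : Set (ℝ × ℝ) := {x | 0 ≤ x.2 ∧ x.2 ≤ s3 * x.1 ∧ x.2 ≤ s3 * (1 - x.1)}

lemma p_mem_T : ∀ i, p i ∈ T := by
  intro i
  fin_cases i <;> refine ⟨?_, ?_, ?_⟩ <;> simp [T, p, s3] <;>
    nlinarith [Real.sqrt_nonneg 3, Real.sq_sqrt (show (0:ℝ) ≤ 3 by norm_num)]

lemma f_maps_T {i : Fin 3} {x : ℝ × ℝ} (hx : x ∈ T) : f i x ∈ T := by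
  obtain ⟨h1, h2, h3⟩ := hx
  have hp := p_mem_T i
  obtain ⟨q1, q2, q3⟩ := hp
  refine ⟨?_, ?_, ?_⟩ <;> simp only [f] <;> [linarith; nlinarith; nlinarith]

lemma V_subset_T : ∀ n, V n ⊆ T := by
  intro n
  induction n with
  | zero => rintro x ⟨i, rfl⟩; exact p_mem_T i
  | succ n ih =>
    rintro x hx
    simp only [V, mem_iUnion] at hx
    obtain ⟨i, y, hy, rfl⟩ := hx
    exact f_maps_T (ih hy)

lemma isClosed_T : IsClosed T := by
  have h1 : IsClosed {x : ℝ × ℝ | 0 ≤ x.2} :=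
    isClosed_le continuous_const continuous_snd
  have h2 : IsClosed {x : ℝ × ℝ | x.2 ≤ s3 * x.1} :=
    isClosed_le continuous_snd (continuous_const.mul continuous_fst)
  have h3 : IsClosed {x : ℝ × ℝ | x.2 ≤ s3 * (1 - x.1)} :=
    isClosed_le continuous_snd (continuous_const.mul (continuous_const.sub continuous_fst))
  have : T = ({x : ℝ × ℝ | 0 ≤ x.2} ∩ {x | x.2 ≤ s3 * x.1} ∩ {x | x.2 ≤ s3 * (1 - x.1)}) := by
    ext x; simp [T, mem_setOf_eq, and_assoc]
  rw [this]
  exact (h1.inter h2).inter h3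

lemma K_subset_T : K ⊆ T := by
  apply closure_minimal _ isClosed_T
  exact iUnion_subset V_subset_T

/-- f i as a homeomorphism. -/
noncomputable def fh (i : Fin 3) : ℝ × ℝ ≃ₜ ℝ × ℝ :=
  (Homeomorph.smulOfNeZero (2⁻¹ : ℝ) (by norm_num)).trans
    (Homeomorph.addRight ((2⁻¹ : ℝ) • p i))

lemma fh_eq (i : Fin 3) (x : ℝ × ℝ) : fh i x = f i x := by
  simp only [fh, Homeomorph.trans_apply, Homeomorph.smulOfNeZero_apply,
    Homeomorph.coe_addRight, f]
  ext <;> simp [Prod.smul_def, smul_eq_mul] <;> ring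

lemma continuous_f (i : Fin 3) : Continuous (f i) := by
  have : Continuous (fh i) := (fh i).continuous
  simpa [funext (fh_eq i)] using this

lemma V_mono : ∀ n, V n ⊆ V (n + 1) := by
  intro n
  induction n with
  | zero =>
    rintro x ⟨i, rfl⟩
    simp only [V, mem_iUnion]
    refine ⟨i, p i, ⟨i, rfl⟩, ?_⟩
    fin_cases i <;> simp [f, p] <;> norm_num
  | succ n ih =>
    rintro x hx
    simp only [V, mem_iUnion] at hx ⊢
    obtain ⟨i, y, hy, rfl⟩ := hx
    exact ⟨i, y, ih hy, rfl⟩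

lemma Vstar_eq : (⋃ n, V n) = ⋃ i : Fin 3, f i '' ⋃ n, V n := by
  ext x
  simp only [mem_iUnion, mem_image]
  constructor
  · rintro ⟨n, hn⟩
    rcases n with _ | n
    · -- x ∈ V 0 ⊆ V 1
      have : x ∈ V 1 := V_mono 0 hn
      simp only [V, mem_iUnion, mem_image] at this
      obtain ⟨i, y, hy, hxy⟩ := this
      exact ⟨i, y, ⟨0, hy⟩, hxy⟩
    · simp only [V, mem_iUnion, mem_image] at hn
      obtain ⟨i, y, hy, hxy⟩ := hn
      exact ⟨i, y, ⟨n, hy⟩, hxy⟩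
  · rintro ⟨i, y, ⟨n, hy⟩, hxy⟩
    refine ⟨n + 1, ?_⟩
    simp only [V, mem_iUnion, mem_image]
    exact ⟨i, y, hy, hxy⟩

lemma K_self_similar : K = ⋃ i : Fin 3, f i '' K := by
  have h1 : ∀ i : Fin 3, f i '' K = closure (f i '' ⋃ n, V n) := by
    intro i
    have h := (fh i).image_closure (⋃ n, V n)
    have e : (fh i : ℝ × ℝ → ℝ × ℝ) = f i := funext (fh_eq i)
    rw [e] at h
    exact h
  calc K = closure (⋃ i : Fin 3, f i '' ⋃ n, V n) := by rw [K, ← Vstar_eq]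
    _ = ⋃ i : Fin 3, closure (f i '' ⋃ n, V n) := by rw [closure_iUnion_of_finite]
    _ = ⋃ i : Fin 3, f i '' K := iUnion_congr (fun i => (h1 i).symm)

lemma f_image_K_subset (i : Fin 3) : f i '' K ⊆ K := by
  conv_rhs => rw [K_self_similar]
  exact subset_iUnion (fun i => f i '' K) i

lemma f_mem_K {i : Fin 3} {x : ℝ × ℝ} (hx : x ∈ K) : f i x ∈ K :=
  f_image_K_subset i ⟨x, hx, rfl⟩

lemma p_mem_K (i : Fin 3) : p i ∈ K :=
  subset_closure (mem_iUnion.2 ⟨0, ⟨i, rfl⟩⟩)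

-- membership tests and inverse maps
lemma K_branch (x : ℝ × ℝ) (hx : x ∈ K) :
    ∃ i : Fin 3, ∃ y ∈ K, x = f i y := by
  rw [K_self_similar] at hx
  simp only [mem_iUnion, mem_image] at hx
  obtain ⟨i, y, hy, hxy⟩ := hx
  exact ⟨i, y, hy, hxy.symm⟩

noncomputable def finv (i : Fin 3) (x : ℝ × ℝ) : ℝ × ℝ :=
  (2*x.1 - (p i).1, 2*x.2 - (p i).2)

lemma f_finv (i : Fin 3) (x : ℝ × ℝ) : f i (finv i x) = x := by
  simp only [f, finv]; ext <;> simp <;> ring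

lemma finv_f (i : Fin 3) (x : ℝ × ℝ) : finv i (f i x) = x := by
  simp only [f, finv]; ext <;> simp <;> ring

lemma continuous_finv (i : Fin 3) : Continuous (finv i) := by
  unfold finv
  fun_prop

-- coordinates of p
lemma p0c : p 0 = ((0:ℝ), (0:ℝ)) := rfl
lemma p1c : p 1 = ((1:ℝ), (0:ℝ)) := rfl
lemma p2c : p 2 = ((1/2 : ℝ), s3/2) := rfl

-- T linear facts
lemma T_l_nonneg {y : ℝ × ℝ} (hy : y ∈ T) : 0 ≤ s3 * y.1 + y.2 := by
  obtain ⟨h1, h2, h3⟩ := hy; linarith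

lemma T_l_le {y : ℝ × ℝ} (hy : y ∈ T) : s3 * y.1 + y.2 ≤ s3 := by
  obtain ⟨h1, h2, h3⟩ := hy; linarith

lemma T_m_nonneg {y : ℝ × ℝ} (hy : y ∈ T) : 0 ≤ s3 * y.1 - y.2 := by
  obtain ⟨h1, h2, h3⟩ := hy; linarith

lemma T_m_le {y : ℝ × ℝ} (hy : y ∈ T) : s3 * y.1 - y.2 ≤ s3 := by
  obtain ⟨h1, h2, h3⟩ := hy; linarith

lemma T_l_eq_zero {y : ℝ × ℝ} (hy : y ∈ T) (h : s3 * y.1 + y.2 = 0) : y = p 0 := by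
  obtain ⟨h1, h2, h3⟩ := hy
  have hp := s3_pos
  have hy2 : y.2 = 0 := by nlinarith
  have hy1 : y.1 = 0 := by nlinarith
  rw [p0c]; ext <;> simp [hy1, hy2]

lemma T_m_eq {y : ℝ × ℝ} (hy : y ∈ T) (h : s3 * y.1 - y.2 = s3) : y = p 1 := by
  obtain ⟨h1, h2, h3⟩ := hy
  have hp := s3_pos
  have hy2 : y.2 = 0 := by nlinarith
  have hy1 : y.1 = 1 := by nlinarith
  rw [p1c]; ext <;> simp [hy1, hy2]

section Interp

variable {S : Type*} (val : S → Fin 3 → ℝ) (step : S → Fin 3 → S)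

noncomputable def bary (g : Fin 3 → ℝ) (x : ℝ × ℝ) : ℝ :=
  g 0 + (g 1 - g 0) * (x.1 - x.2/s3) + (g 2 - g 0) * (2*x.2/s3)

lemma continuous_bary (g : Fin 3 → ℝ) : Continuous (bary g) := by
  unfold bary
  fun_prop

noncomputable def interp : ℕ → S → ℝ × ℝ → ℝ
  | 0, s, x => bary (val s) x
  | (m+1), s, x =>
    if s3 * x.1 + x.2 ≤ s3/2 then interp m (step s 0) (finv 0 x)
    else if s3/2 ≤ s3 * x.1 - x.2 then interp m (step s 1) (finv 1 x)
    else interp m (step s 2) (finv 2 x)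

variable (hA1 : ∀ s i, val (step s i) i = val s i)
variable (hA4 : ∀ s, val (step s 0) 1 = val (step s 1) 0)
variable (hA5 : ∀ s, val (step s 0) 2 = val (step s 2) 0)
variable (hA6 : ∀ s, val (step s 1) 2 = val (step s 2) 1)

lemma bary_vertex0 (g : Fin 3 → ℝ) : bary g (p 0) = g 0 := by
  simp [bary, p0c]
lemma bary_vertex1 (g : Fin 3 → ℝ) : bary g (p 1) = g 1 := by
  simp [bary, p1c]; try ring
lemma bary_vertex2 (g : Fin 3 → ℝ) : bary g (p 2) = g 2 := by
  have hne : s3 ≠ 0 := ne_of_gt s3_pos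
  simp only [bary, p2c]
  field_simp
  try ring

lemma bary_vertex (g : Fin 3 → ℝ) (i : Fin 3) : bary g (p i) = g i := by
  fin_cases i
  · exact bary_vertex0 g
  · exact bary_vertex1 g
  · exact bary_vertex2 g

include hA1 hA4 hA5 hA6

lemma interp_corner (m : ℕ) (s : S) (i : Fin 3) : interp val step m s (p i) = val s i := by
  induction m generalizing s i with
  | zero => exact bary_vertex (val s) i
  | succ m ih =>
    have hs := s3_pos
    fin_cases i
    · show interp val step (m+1) s (p 0) = val s 0
      rw [show interp val step (m+1) s (p 0) =
          interp val step m (step s 0) (finv 0 (p 0)) from if_pos (by simp [p0c]; linarith)]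
      have : finv 0 (p 0) = p 0 := by simp [finv, p0c]
      rw [this, ih (step s 0) 0, hA1]
    · show interp val step (m+1) s (p 1) = val s 1
      have h1 : ¬ (s3 * (p 1).1 + (p 1).2 ≤ s3/2) := by simp [p1c]; linarith
      have h2 : s3/2 ≤ s3 * (p 1).1 - (p 1).2 := by simp [p1c]; linarith
      rw [show interp val step (m+1) s (p 1) =
          interp val step m (step s 1) (finv 1 (p 1)) from by
        simp only [interp, if_neg h1, if_pos h2]]
      have : finv 1 (p 1) = p 1 := by
        simp only [finv, p1c]; norm_num
      rw [this, ih (step s 1) 1, hA1]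
    · show interp val step (m+1) s (p 2) = val s 2
      have h1 : ¬ (s3 * (p 2).1 + (p 2).2 ≤ s3/2) := by simp [p2c]; linarith
      have h2 : ¬ (s3/2 ≤ s3 * (p 2).1 - (p 2).2) := by simp [p2c]; linarith
      rw [show interp val step (m+1) s (p 2) =
          interp val step m (step s 2) (finv 2 (p 2)) from by
        simp only [interp, if_neg h1, if_neg h2]]
      have : finv 2 (p 2) = p 2 := by
        simp only [finv, p2c]; ext <;> norm_num <;> ring_nf
      rw [this, ih (step s 2) 2, hA1]

lemma interp_step_eq (m : ℕ) (s : S) (i : Fin 3) (y : ℝ × ℝ) (hy : y ∈ K) :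
    interp val step (m+1) s (f i y) = interp val step m (step s i) y := by
  have hT := K_subset_T hy
  have hs := s3_pos
  have hl0 := T_l_nonneg hT
  have hl1 := T_l_le hT
  have hm0 := T_m_nonneg hT
  have hm1 := T_m_le hT
  fin_cases i
  · show interp val step (m+1) s (f 0 y) = interp val step m (step s 0) y
    have ht : s3 * (f 0 y).1 + (f 0 y).2 ≤ s3/2 := by
      simp [f, p0c]; linarith
    rw [show interp val step (m+1) s (f 0 y) =
        interp val step m (step s 0) (finv 0 (f 0 y)) from if_pos ht, finv_f]
  · show interp val step (m+1) s (f 1 y) = interp val step m (step s 1) y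
    by_cases h0 : y = p 0
    · subst h0
      have hf : f 1 (p 0) = ((1:ℝ)/2, (0:ℝ)) := by
        rw [p0c]; simp only [f, p1c]; ext <;> norm_num
      have ht : s3 * ((1:ℝ)/2, (0:ℝ)).1 + ((1:ℝ)/2, (0:ℝ)).2 ≤ s3/2 := by
        simp; linarith
      rw [hf, show interp val step (m+1) s ((1:ℝ)/2, (0:ℝ)) =
          interp val step m (step s 0) (finv 0 ((1:ℝ)/2, (0:ℝ))) from if_pos ht]
      have hv : finv 0 ((1:ℝ)/2, (0:ℝ)) = p 1 := by
        rw [p1c]; simp only [finv, p0c]; ext <;> norm_num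
      rw [hv, interp_corner val step hA1 hA4 hA5 hA6, hA4,
        ← interp_corner val step hA1 hA4 hA5 hA6 m (step s 1) 0]
    · have hpos : 0 < s3 * y.1 + y.2 := by
        rcases lt_or_eq_of_le hl0 with h | h
        · exact h
        · exact absurd (T_l_eq_zero hT h.symm) h0
      have h1 : ¬ (s3 * (f 1 y).1 + (f 1 y).2 ≤ s3/2) := by
        simp [f, p1c]; nlinarith
      have h2 : s3/2 ≤ s3 * (f 1 y).1 - (f 1 y).2 := by
        simp [f, p1c]; linarith
      rw [show interp val step (m+1) s (f 1 y) =
          interp val step m (step s 1) (finv 1 (f 1 y)) from by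
        simp only [interp, if_neg h1, if_pos h2], finv_f]
  · show interp val step (m+1) s (f 2 y) = interp val step m (step s 2) y
    by_cases h0 : y = p 0
    · subst h0
      have hf : f 2 (p 0) = ((1:ℝ)/4, s3/4) := by
        rw [p0c]; simp only [f, p2c]; ext <;> norm_num <;> ring
      have ht : s3 * ((1:ℝ)/4, s3/4).1 + ((1:ℝ)/4, s3/4).2 ≤ s3/2 := by
        simp; linarith
      rw [hf, show interp val step (m+1) s ((1:ℝ)/4, s3/4) =
          interp val step m (step s 0) (finv 0 ((1:ℝ)/4, s3/4)) from if_pos ht]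
      have hv : finv 0 ((1:ℝ)/4, s3/4) = p 2 := by
        rw [p2c]; simp only [finv, p0c]; ext <;> norm_num <;> ring
      rw [hv, interp_corner val step hA1 hA4 hA5 hA6, hA5,
        ← interp_corner val step hA1 hA4 hA5 hA6 m (step s 2) 0]
    · by_cases h1 : y = p 1
      · subst h1
        have hf : f 2 (p 1) = ((3:ℝ)/4, s3/4) := by
          rw [p1c]; simp only [f, p2c]; ext <;> norm_num <;> ring
        have hta : ¬ (s3 * ((3:ℝ)/4, s3/4).1 + ((3:ℝ)/4, s3/4).2 ≤ s3/2) := by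
          simp; nlinarith
        have htb : s3/2 ≤ s3 * ((3:ℝ)/4, s3/4).1 - ((3:ℝ)/4, s3/4).2 := by
          simp; nlinarith
        rw [hf, show interp val step (m+1) s ((3:ℝ)/4, s3/4) =
            interp val step m (step s 1) (finv 1 ((3:ℝ)/4, s3/4)) from by
          simp only [interp, if_neg hta, if_pos htb]]
        have hv : finv 1 ((3:ℝ)/4, s3/4) = p 2 := by
          rw [p2c]; simp only [finv, p1c]; ext <;> norm_num <;> ring
        rw [hv, interp_corner val step hA1 hA4 hA5 hA6, hA6,
          ← interp_corner val step hA1 hA4 hA5 hA6 m (step s 2) 1]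
      · have hposl : 0 < s3 * y.1 + y.2 := by
          rcases lt_or_eq_of_le hl0 with h | h
          · exact h
          · exact absurd (T_l_eq_zero hT h.symm) h0
        have hposm : s3 * y.1 - y.2 < s3 := by
          rcases lt_or_eq_of_le hm1 with h | h
          · exact h
          · exact absurd (T_m_eq hT h) h1
        have hta : ¬ (s3 * (f 2 y).1 + (f 2 y).2 ≤ s3/2) := by
          simp [f, p2c]; nlinarith
        have htb : ¬ (s3/2 ≤ s3 * (f 2 y).1 - (f 2 y).2) := by
          simp [f, p2c]; nlinarith
        rw [show interp val step (m+1) s (f 2 y) =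
            interp val step m (step s 2) (finv 2 (f 2 y)) from by
          simp only [interp, if_neg hta, if_neg htb], finv_f]

omit hA1 hA4 hA5 hA6

lemma bary_sub (g h : Fin 3 → ℝ) (y : ℝ × ℝ) :
    bary g y - bary h y = bary (fun k => g k - h k) y := by
  simp only [bary]; ring

lemma bary_comp (g : Fin 3 → ℝ) (i : Fin 3) (y : ℝ × ℝ) :
    bary g (f i y) = bary (fun k => (g i + g k)/2) y := by
  have hne : s3 ≠ 0 := ne_of_gt s3_pos
  fin_cases i
  · show bary g (f 0 y) = bary (fun k => (g 0 + g k)/2) y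
    simp only [bary, f, p0c]
    field_simp
    ring
  · show bary g (f 1 y) = bary (fun k => (g 1 + g k)/2) y
    simp only [bary, f, p1c]
    field_simp
    ring
  · show bary g (f 2 y) = bary (fun k => (g 2 + g k)/2) y
    simp only [bary, f, p2c]
    field_simp
    ring

lemma bary_bound (g : Fin 3 → ℝ) (y : ℝ × ℝ) (hy : y ∈ T) :
    |bary g y| ≤ |g 0| + |g 1| + |g 2| := by
  obtain ⟨h1, h2, h3⟩ := hy
  have hs := s3_pos
  have hne : s3 ≠ 0 := ne_of_gt hs
  set l1 : ℝ := y.1 - y.2/s3 with hl1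
  set l2 : ℝ := 2*(y.2/s3) with hl2
  have hd : y.2/s3 ≤ y.1 := by rw [div_le_iff₀ hs]; nlinarith
  have hd0 : 0 ≤ y.2/s3 := div_nonneg h1 (le_of_lt hs)
  have hl1n : 0 ≤ l1 := by rw [hl1]; linarith
  have hl2n : 0 ≤ l2 := by rw [hl2]; positivity
  have hy1le : y.1 ≤ 1 := by nlinarith
  have hsum : l1 + l2 ≤ 1 := by
    rw [hl1, hl2]
    have h4 : y.1 + y.2/s3 ≤ 1 := by
      rw [← sub_nonneg]
      have e : 1 - (y.1 + y.2/s3) = (s3 * (1 - y.1) - y.2)/s3 := by field_simp; ring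
      rw [e]
      apply div_nonneg _ (le_of_lt hs)
      linarith
    linarith
  have hexp : bary g y = g 0 * (1 - l1 - l2) + g 1 * l1 + g 2 * l2 := by
    simp only [bary, hl1, hl2]; ring
  rw [hexp]
  have b0 := abs_nonneg (g 0); have b1 := abs_nonneg (g 1); have b2 := abs_nonneg (g 2)
  have e0 := le_abs_self (g 0); have e0' := neg_abs_le (g 0)
  have e1 := le_abs_self (g 1); have e1' := neg_abs_le (g 1)
  have e2 := le_abs_self (g 2); have e2' := neg_abs_le (g 2)
  rw [abs_le]
  constructor <;> nlinarith [mul_nonneg b0 hl1n, mul_nonneg b0 hl2n,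
    mul_nonneg b1 hl1n, mul_nonneg b2 hl2n,
    mul_le_mul_of_nonneg_right e1 hl1n, mul_le_mul_of_nonneg_right e1' hl1n,
    mul_le_mul_of_nonneg_right e2 hl2n, mul_le_mul_of_nonneg_right e2' hl2n,
    mul_le_mul_of_nonneg_left (show (1 : ℝ) - l1 - l2 ≤ 1 by linarith) b0]

variable (Mb : S → ℝ) (rr : ℝ)
variable (hMb0 : ∀ s, 0 ≤ Mb s)
variable (hdev : ∀ s (i k : Fin 3), |val (step s i) k - (val s i + val s k)/2| ≤ Mb s)
variable (hcontr : ∀ s (i : Fin 3), Mb (step s i) ≤ rr * Mb s)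
variable (hrr0 : 0 ≤ rr)

include hA1 hA4 hA5 hA6 hMb0 hdev hcontr hrr0

lemma interp_diff (m : ℕ) (s : S) (x : ℝ × ℝ) (hx : x ∈ K) :
    |interp val step (m+1) s x - interp val step m s x| ≤ 3 * Mb s * rr^m := by
  induction m generalizing s x with
  | zero =>
    obtain ⟨i, y, hy, rfl⟩ := K_branch x hx
    rw [interp_step_eq val step hA1 hA4 hA5 hA6 0 s i y hy]
    show |bary (val (step s i)) y - bary (val s) (f i y)| ≤ 3 * Mb s * rr^0
    have key : bary (val (step s i)) y - bary (val s) (f i y)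
        = bary (fun k => val (step s i) k - (val s i + val s k)/2) y := by
      rw [bary_comp, bary_sub]
    rw [key]
    have hb := bary_bound (fun k => val (step s i) k - (val s i + val s k)/2) y
      (K_subset_T hy)
    simp only [pow_zero, mul_one]
    have d0 := hdev s i 0
    have d1 := hdev s i 1
    have d2 := hdev s i 2
    calc |bary (fun k => val (step s i) k - (val s i + val s k)/2) y|
        ≤ _ := hb
      _ ≤ 3 * Mb s := by linarith
  | succ m ih =>
    obtain ⟨i, y, hy, rfl⟩ := K_branch x hx
    rw [interp_step_eq val step hA1 hA4 hA5 hA6 (m+1) s i y hy,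
      interp_step_eq val step hA1 hA4 hA5 hA6 m s i y hy]
    calc |interp val step (m+1) (step s i) y - interp val step m (step s i) y|
        ≤ 3 * Mb (step s i) * rr^m := ih (step s i) y hy
      _ ≤ 3 * (rr * Mb s) * rr^m := by
          have := hcontr s i
          nlinarith [pow_nonneg hrr0 m, hMb0 (step s i)]
      _ = 3 * Mb s * rr^(m+1) := by rw [pow_succ]; ring

omit hMb0 hdev hcontr hrr0
include hA1 hA4 hA5 hA6

lemma interp_continuousOn (m : ℕ) (s : S) : ContinuousOn (interp val step m s) K := by
  induction m generalizing s with
  | zero => exact (continuous_bary (val s)).continuousOn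
  | succ m ih =>
    intro x hx
    have hsub : K = (f 0 '' K) ∪ ((f 1 '' K) ∪ (f 2 '' K)) := by
      have he : (⋃ i : Fin 3, f i '' K) = (f 0 '' K) ∪ ((f 1 '' K) ∪ (f 2 '' K)) := by
        ext z
        simp only [mem_iUnion, mem_union]
        constructor
        · rintro ⟨i, hz⟩
          fin_cases i
          · exact Or.inl hz
          · exact Or.inr (Or.inl hz)
          · exact Or.inr (Or.inr hz)
        · rintro (hz | hz | hz)
          exacts [⟨0, hz⟩, ⟨1, hz⟩, ⟨2, hz⟩]
      rw [← he, ← K_self_similar]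
    have hclosed : ∀ i : Fin 3, IsClosed (f i '' K) := by
      intro i
      have : f i '' K = fh i '' K := by
        apply image_congr
        intro z _
        exact (fh_eq i z).symm
      rw [this]
      exact (Homeomorph.isClosedMap (fh i)) K isClosed_closure
    have hpiece : ∀ i : Fin 3, ContinuousOn (interp val step (m+1) s) (f i '' K) := by
      intro i
      have heq : ∀ z ∈ f i '' K, interp val step (m+1) s z
          = interp val step m (step s i) (finv i z) := by
        rintro z ⟨y, hy, rfl⟩
        rw [finv_f]
        exact interp_step_eq val step hA1 hA4 hA5 hA6 m s i y hy
      apply ContinuousOn.congr _ heq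
      apply (ih (step s i)).comp (continuous_finv i).continuousOn
      rintro z ⟨y, hy, rfl⟩
      rw [finv_f]
      exact hy
    have hcwa : ∀ i : Fin 3, ContinuousWithinAt (interp val step (m+1) s) (f i '' K) x := by
      intro i
      by_cases hxi : x ∈ f i '' K
      · exact (hpiece i) x hxi
      · exact continuousWithinAt_of_notMem_closure (by
          rwa [(hclosed i).closure_eq])
    have : ContinuousWithinAt (interp val step (m+1) s)
        ((f 0 '' K) ∪ ((f 1 '' K) ∪ (f 2 '' K))) x :=
      (hcwa 0).union ((hcwa 1).union (hcwa 2))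
    rw [← hsub] at this
    exact this

noncomputable def uS (s : S) (x : ℝ × ℝ) : ℝ :=
  interp val step 0 s x + ∑' m : ℕ, (interp val step (m+1) s x - interp val step m s x)

include hA1 hA4 hA5 hA6 hMb0 hdev hcontr hrr0
variable (hrr1 : rr < 1)
include hrr1

lemma uS_summable (s : S) (x : ℝ × ℝ) (hx : x ∈ K) :
    Summable (fun m => interp val step (m+1) s x - interp val step m s x) := by
  apply Summable.of_norm_bounded (g := fun m => 3 * Mb s * rr^m)
  · exact (summable_geometric_of_lt_one hrr0 hrr1).mul_left _
  · intro m
    rw [Real.norm_eq_abs]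
    exact interp_diff val step hA1 hA4 hA5 hA6 Mb rr hMb0 hdev hcontr hrr0 m s x hx

lemma uS_tendsto (s : S) (x : ℝ × ℝ) (hx : x ∈ K) :
    Filter.Tendsto (fun m => interp val step m s x) Filter.atTop (nhds (uS val step s x)) := by
  have hsum := uS_summable val step hA1 hA4 hA5 hA6 Mb rr hMb0 hdev hcontr hrr0 hrr1 s x hx
  have := hsum.hasSum.tendsto_sum_nat
  have heq : ∀ n, ∑ m ∈ Finset.range n, (interp val step (m+1) s x - interp val step m s x)
      = interp val step n s x - interp val step 0 s x := by
    intro n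
    exact Finset.sum_range_sub (fun m => interp val step m s x) n
  simp only [heq] at this
  have h2 := this.add (tendsto_const_nhds (x := interp val step 0 s x))
  simp only [sub_add_cancel] at h2
  convert h2 using 2
  · simp [uS]
    ring
  
lemma uS_continuousOn (s : S) : ContinuousOn (uS val step s) K := by
  apply ContinuousOn.add ((interp_continuousOn val step hA1 hA4 hA5 hA6 0 s))
  have : TendstoUniformlyOn
      (fun (t : Finset ℕ) x => ∑ m ∈ t, (interp val step (m+1) s x - interp val step m s x))
      (fun x => ∑' m, (interp val step (m+1) s x - interp val step m s x))
      Filter.atTop K := by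
    apply tendstoUniformlyOn_tsum (u := fun m => 3 * Mb s * rr^m)
    · exact (summable_geometric_of_lt_one hrr0 hrr1).mul_left _
    · intro m x hx
      rw [Real.norm_eq_abs]
      exact interp_diff val step hA1 hA4 hA5 hA6 Mb rr hMb0 hdev hcontr hrr0 m s x hx
  apply this.continuousOn
  refine Filter.Eventually.frequently (Filter.Eventually.of_forall ?_)
  intro t
  apply continuousOn_finset_sum
  intro m _
  exact (interp_continuousOn val step hA1 hA4 hA5 hA6 (m+1) s).sub
    (interp_continuousOn val step hA1 hA4 hA5 hA6 m s)

lemma uS_corner (s : S) (i : Fin 3) : uS val step s (p i) = val s i := by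
  have ht := uS_tendsto val step hA1 hA4 hA5 hA6 Mb rr hMb0 hdev hcontr hrr0 hrr1 s (p i)
    (p_mem_K i)
  have hconst : ∀ m, interp val step m s (p i) = val s i :=
    fun m => interp_corner val step hA1 hA4 hA5 hA6 m s i
  simp only [hconst] at ht
  exact (tendsto_const_nhds_iff.mp ht).symm

lemma uS_step (s : S) (i : Fin 3) (y : ℝ × ℝ) (hy : y ∈ K) :
    uS val step s (f i y) = uS val step (step s i) y := by
  have h1 := uS_tendsto val step hA1 hA4 hA5 hA6 Mb rr hMb0 hdev hcontr hrr0 hrr1 s (f i y)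
    (f_mem_K hy)
  have h2 := uS_tendsto val step hA1 hA4 hA5 hA6 Mb rr hMb0 hdev hcontr hrr0 hrr1 (step s i) y hy
  have h3 : Filter.Tendsto (fun m => interp val step (m+1) s (f i y)) Filter.atTop
      (nhds (uS val step s (f i y))) := by
    exact h1.comp (Filter.tendsto_add_atTop_nat 1)
  have heq : (fun m => interp val step (m+1) s (f i y))
      = (fun m => interp val step m (step s i) y) := by
    funext m
    exact interp_step_eq val step hA1 hA4 hA5 hA6 m s i y hy
  rw [heq] at h3
  exact tendsto_nhds_unique h3 h2

end Interp

end SGP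



namespace SGF
open SG SGP SGP2 SGP2.St

lemma rt_lt_one : rt < 1 := by nlinarith [rt_nonneg, rt_sq]

noncomputable def uu : ℝ × ℝ → ℝ := SGP.uS SGP2.val SGP2.step (spine 0)

lemma u_corner (s : St) (i : Fin 3) : SGP.uS SGP2.val SGP2.step s (SG.p i) = SGP2.val s i :=
  SGP.uS_corner SGP2.val SGP2.step SGP2.hA1 SGP2.hA4 SGP2.hA5 SGP2.hA6 SGP2.Mb rt
    SGP2.Mb_nonneg SGP2.hdev SGP2.hcontr rt_nonneg rt_lt_one s i

lemma u_step (s : St) (i : Fin 3) (y : ℝ × ℝ) (hy : y ∈ SG.K) :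
    SGP.uS SGP2.val SGP2.step s (SG.f i y) = SGP.uS SGP2.val SGP2.step (SGP2.step s i) y :=
  SGP.uS_step SGP2.val SGP2.step SGP2.hA1 SGP2.hA4 SGP2.hA5 SGP2.hA6 SGP2.Mb rt
    SGP2.Mb_nonneg SGP2.hdev SGP2.hcontr rt_nonneg rt_lt_one s i y hy

lemma u_cont : ContinuousOn uu SG.K :=
  SGP.uS_continuousOn SGP2.val SGP2.step SGP2.hA1 SGP2.hA4 SGP2.hA5 SGP2.hA6 SGP2.Mb rt
    SGP2.Mb_nonneg SGP2.hdev SGP2.hcontr rt_nonneg rt_lt_one (spine 0)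

noncomputable def wstate {n : ℕ} (s : St) (w : Fin n → Fin 3) : St :=
  (List.ofFn w).foldl SGP2.step s

lemma fw_nil (w : Fin 0 → Fin 3) (x : ℝ × ℝ) : fw w x = x := by
  simp [fw, List.ofFn_zero]

lemma fw_cons {n : ℕ} (i : Fin 3) (w : Fin n → Fin 3) (x : ℝ × ℝ) :
    fw (Fin.cons i w) x = SG.f i (fw w x) := by
  unfold fw
  rw [List.ofFn_succ]
  simp [Fin.cons_zero, Fin.cons_succ]

lemma wstate_nil (s : St) (w : Fin 0 → Fin 3) : wstate s w = s := by
  simp [wstate, List.ofFn_zero]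

lemma wstate_cons {n : ℕ} (s : St) (i : Fin 3) (w : Fin n → Fin 3) :
    wstate s (Fin.cons i w) = wstate (SGP2.step s i) w := by
  unfold wstate
  rw [List.ofFn_succ]
  simp [Fin.cons_zero, Fin.cons_succ]

lemma fw_mem_K {n : ℕ} (w : Fin n → Fin 3) (i : Fin 3) : fw w (SG.p i) ∈ SG.K := by
  induction n with
  | zero => rw [fw_nil]; exact p_mem_K i
  | succ n ih =>
    rw [← Fin.cons_self_tail w, fw_cons]
    exact f_mem_K (ih (Fin.tail w))

lemma uS_word {n : ℕ} (s : St) (w : Fin n → Fin 3) (i : Fin 3) :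
    SGP.uS SGP2.val SGP2.step s (fw w (SG.p i)) = SGP2.val (wstate s w) i := by
  induction n generalizing s with
  | zero => rw [fw_nil, wstate_nil]; exact u_corner s i
  | succ n ih =>
    rw [← Fin.cons_self_tail w, fw_cons, wstate_cons,
      u_step s (w 0) _ (fw_mem_K (Fin.tail w) i), ih]

lemma sum_words {n : ℕ} (F : (Fin (n+1) → Fin 3) → ℝ) :
    ∑ w : Fin (n+1) → Fin 3, F w
      = ∑ i : Fin 3, ∑ w : Fin n → Fin 3, F (Fin.cons i w) := by
  rw [← (Fin.consEquiv (fun _ : Fin (n+1) => Fin 3)).sum_comp F]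
  rw [Fintype.sum_prod_type]
  rfl

lemma E3_eq (g : Fin 3 → ℝ) :
    (∑ i : Fin 3, ∑ j : Fin 3, (g i - g j)^2)/2 = E3 g := by
  simp [Fin.sum_univ_three, E3]
  ring

lemma sum_harm (n : ℕ) : ∀ A B C : ℝ,
    ∑ w : Fin n → Fin 3, E3 (SGP2.val (wstate (harm A B C) w))
      = (3/5)^n * E3 (SGP2.val (harm A B C)) := by
  induction n with
  | zero =>
    intro A B C
    simp only [wstate_nil]
    rw [Fintype.sum_eq_single (fun _ => 0)]
    · simp
    · intro w hw
      exact absurd (funext fun i => Fin.elim0 i) hw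
  | succ n ih =>
    intro A B C
    rw [sum_words (fun w => E3 (SGP2.val (wstate (harm A B C) w)))]
    simp only [wstate_cons]
    rw [Fin.sum_univ_three]
    have e0 : SGP2.step (harm A B C) 0 = harm A ((2*A+2*B+C)/5) ((2*A+2*C+B)/5) := rfl
    have e1 : SGP2.step (harm A B C) 1 = harm ((2*A+2*B+C)/5) B ((2*B+2*C+A)/5) := rfl
    have e2 : SGP2.step (harm A B C) 2 = harm ((2*A+2*C+B)/5) ((2*B+2*C+A)/5) C := rfl
    rw [e0, e1, e2, ih, ih, ih, ← e0, ← e1, ← e2]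
    have hd := deltaY A B C
    rw [pow_succ]
    linear_combination ((3:ℝ)/5)^n * hd

lemma sum_spine : ∀ n j : ℕ,
    ∑ w : Fin n → Fin 3, E3 (SGP2.val (wstate (spine (j+1)) w))
      = (n+1) * (3/5)^(n+(j+1)) := by
  intro n
  induction n with
  | zero =>
    intro j
    simp only [wstate_nil]
    rw [Fintype.sum_eq_single (fun _ => 0)]
    · rw [E3_spine_val j]; simp
    · intro w hw
      exact absurd (funext fun i => Fin.elim0 i) hw
  | succ n ih =>
    intro j
    rw [sum_words (fun w => E3 (SGP2.val (wstate (spine (j+1)) w)))]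
    simp only [wstate_cons]
    rw [Fin.sum_univ_three]
    have e0 : SGP2.step (spine (j+1)) 0 = spine (j+2) := rfl
    rw [e0, ih (j+1)]
    have h1 : ∑ w : Fin n → Fin 3, E3 (SGP2.val (wstate (SGP2.step (spine (j+1)) 1) w))
        = (3/5)^n * ((3/5)^(j+2)/2) := by
      have e1 : SGP2.step (spine (j+1)) 1 = harm (vs (j+2)) (vs (j+1)) (ws (j+1)) := rfl
      rw [e1, sum_harm n, ← e1, E3_side1 j]
    have h2 : ∑ w : Fin n → Fin 3, E3 (SGP2.val (wstate (SGP2.step (spine (j+1)) 2) w))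
        = (3/5)^n * ((3/5)^(j+2)/2) := by
      have e2 : SGP2.step (spine (j+1)) 2 = harm (vs (j+2)) (ws (j+1)) (vs (j+1)) := rfl
      rw [e2, sum_harm n, ← e2, E3_side2 j]
    rw [h1, h2]
    have hp1 : ((3:ℝ)/5)^(n+(j+2)) = (3/5)^n * (3/5)^(j+2) := pow_add _ _ _
    have hp2 : ((3:ℝ)/5)^(n+1+(j+1)) = (3/5)^n * (3/5)^(j+2) := by
      rw [← pow_add]; ring_nf
    rw [hp1, hp2]
    push_cast
    ring

lemma sum_spine0 (n : ℕ) (hn : 1 ≤ n) :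
    ∑ w : Fin n → Fin 3, E3 (SGP2.val (wstate (spine 0) w)) = n * (3/5)^n := by
  obtain ⟨m, rfl⟩ : ∃ m, n = m + 1 := ⟨n - 1, by omega⟩
  rw [sum_words (fun w => E3 (SGP2.val (wstate (spine 0) w)))]
  simp only [wstate_cons]
  rw [Fin.sum_univ_three]
  have e0 : SGP2.step (spine 0) 0 = spine 1 := rfl
  rw [e0]
  have h0 := sum_spine m 0
  rw [h0]
  have h1 : ∑ w : Fin m → Fin 3, E3 (SGP2.val (wstate (SGP2.step (spine 0) 1) w))
      = 0 := by
    have e1 : SGP2.step (spine 0) 1 = harm (vs 1) (vs 0) (ws 0) := rfl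
    rw [e1, sum_harm m, ← e1, E3_side1_zero, mul_zero]
  have h2 : ∑ w : Fin m → Fin 3, E3 (SGP2.val (wstate (SGP2.step (spine 0) 2) w))
      = 0 := by
    have e2 : SGP2.step (spine 0) 2 = harm (vs 1) (ws 0) (vs 0) := rfl
    rw [e2, sum_harm m, ← e2, E3_side2_zero, mul_zero]
  rw [h1, h2]
  push_cast
  ring_nf

end SGF

/-- There exists a continuous function `u : K → ℝ` on the Sierpiński gasket
with `a_n(u) = n` for every `n ≥ 1`. -/
theorem stmt_2 :
    ∃ u : ℝ × ℝ → ℝ, ContinuousOn u SG.K ∧ ∀ n : ℕ, 1 ≤ n → SG.a n u = n := by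
  refine ⟨SGF.uu, SGF.u_cont, ?_⟩
  intro n hn
  unfold SG.a
  have hw : ∀ w : Fin n → Fin 3,
      (∑ i : Fin 3, ∑ j : Fin 3, (SGF.uu (SG.fw w (SG.p i)) - SGF.uu (SG.fw w (SG.p j)))^2)/2
        = SGP2.E3 (SGP2.val (SGF.wstate (SGP2.St.spine 0) w)) := by
    intro w
    have hv : ∀ i : Fin 3, SGF.uu (SG.fw w (SG.p i))
        = SGP2.val (SGF.wstate (SGP2.St.spine 0) w) i := fun i => SGF.uS_word _ w i
    simp only [hv]
    exact SGF.E3_eq _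
  rw [Finset.sum_congr rfl (fun w _ => hw w), SGF.sum_spine0 n hn]
  have : ((5:ℝ)/3)^n * (3/5)^n = 1 := by
    rw [← mul_pow]
    norm_num
  calc (5/3)^n * (n * (3/5)^n) = ((5:ℝ)/3)^n * (3/5)^n * n := by ring
    _ = n := by rw [this, one_mul]
end

section
/- There exists a unique continuous, strictly increasing function f : [0,1] → ℝ with f(0) = 0 and f(1) = 1 such that for every integer n ≥ 0 and every i ∈ {0, 1, …, 3^n − 1}: f((3i+1)/3^{n+1}) = (5/7)·f(i/3^n) + (2/7)·f((i+1)/3^n) and f((3i+2)/3^{n+1}) = (2/7)·f(i/3^n) + (5/7)·f((i+1)/3^n). -/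
open Set

noncomputable def vv : ℕ → ℕ → ℝ
  | 0, i => if i = 0 then 0 else 1
  | (n+1), j =>
      if j % 3 = 0 then vv n (j / 3)
      else if j % 3 = 1 then 5/7 * vv n (j / 3) + 2/7 * vv n (j / 3 + 1)
      else 2/7 * vv n (j / 3) + 5/7 * vv n (j / 3 + 1)

lemma vv_zero (n : ℕ) : vv n 0 = 0 := by
  induction n with
  | zero => simp [vv]
  | succ n ih => simp [vv, ih]

lemma vv3_0 (n i : ℕ) : vv (n+1) (3*i) = vv n i := by
  simp [vv, Nat.mul_mod_right, Nat.mul_div_cancel_left]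

lemma vv3_1 (n i : ℕ) : vv (n+1) (3*i+1) = 5/7 * vv n i + 2/7 * vv n (i+1) := by
  have h1 : (3*i+1) % 3 = 1 := by omega
  have h2 : (3*i+1) / 3 = i := by omega
  simp [vv, h1, h2]

lemma vv3_2 (n i : ℕ) : vv (n+1) (3*i+2) = 2/7 * vv n i + 5/7 * vv n (i+1) := by
  have h1 : (3*i+2) % 3 = 2 := by omega
  have h2 : (3*i+2) / 3 = i := by omega
  simp [vv, h1, h2]

lemma vv_ge (n : ℕ) : ∀ i, 3 ^ n ≤ i → vv n i = 1 := by
  induction n with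
  | zero => intro i h; simp [vv]; omega
  | succ n ih =>
    intro j h
    have h3 : 3 ^ n ≤ j / 3 := by
      have : 3 ^ (n+1) = 3 ^ n * 3 := pow_succ 3 n
      omega
    have e1 := ih (j/3) h3
    have e2 := ih (j/3+1) (le_trans h3 (Nat.le_succ _))
    have hm : j % 3 = 0 ∨ j % 3 = 1 ∨ j % 3 = 2 := by omega
    rcases hm with h0 | h0 | h0 <;>
      simp [vv, h0, e1, e2] <;> norm_num

lemma vv_step (n j : ℕ) :
    vv (n+1) (j+1) - vv (n+1) j = 2/7 * (vv n (j/3+1) - vv n (j/3)) ∨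
    vv (n+1) (j+1) - vv (n+1) j = 3/7 * (vv n (j/3+1) - vv n (j/3)) := by
  have hm : j % 3 = 0 ∨ j % 3 = 1 ∨ j % 3 = 2 := by omega
  set q := j / 3 with hq
  rcases hm with h0 | h0 | h0
  · have hj : j = 3*q := by omega
    left
    rw [hj, show 3*q+1 = 3*q+1 from rfl, vv3_1, vv3_0]; ring
  · have hj : j = 3*q+1 := by omega
    right
    rw [hj, show 3*q+1+1 = 3*q+2 from rfl, vv3_2, vv3_1]; ring
  · have hj : j = 3*q+2 := by omega
    left
    rw [hj, show 3*q+2+1 = 3*(q+1) from rfl, vv3_0, vv3_2]; ring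

lemma vv_d_nonneg (n : ℕ) : ∀ i, 0 ≤ vv n (i+1) - vv n i := by
  induction n with
  | zero => intro i; rcases Nat.eq_zero_or_pos i with h | h <;> simp [vv, h] <;> simp [Nat.pos_iff_ne_zero.mp h] <;> norm_num
  | succ n ih =>
    intro j
    rcases vv_step n j with h | h <;> rw [h] <;> nlinarith [ih (j/3)]

lemma vv_d_le (n : ℕ) : ∀ i, vv n (i+1) - vv n i ≤ (3/7) ^ n := by
  induction n with
  | zero =>
    intro i
    rcases Nat.eq_zero_or_pos i with h | h
    · simp [vv, h]
    · simp [vv, Nat.pos_iff_ne_zero.mp h]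
  | succ n ih =>
    intro j
    have h1 := ih (j/3)
    have h2 := vv_d_nonneg n (j/3)
    rcases vv_step n j with h | h <;> rw [h, pow_succ] <;> nlinarith

lemma vv_d_lb (n : ℕ) : ∀ i, i < 3 ^ n → (2/7) ^ n ≤ vv n (i+1) - vv n i := by
  induction n with
  | zero => intro i h; interval_cases i; simp [vv]
  | succ n ih =>
    intro j hj
    have hq : j / 3 < 3 ^ n := by
      have : 3 ^ (n+1) = 3 ^ n * 3 := pow_succ 3 n
      omega
    have h1 := ih (j/3) hq
    have h0 : (0:ℝ) < (2/7) ^ n := by positivity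
    rcases vv_step n j with h | h <;> rw [h, pow_succ] <;> nlinarith

lemma vv_mono (n : ℕ) : Monotone (vv n) :=
  monotone_nat_of_le_succ fun i => by linarith [vv_d_nonneg n i]




lemma vv_nonneg (n i : ℕ) : 0 ≤ vv n i := by
  have := vv_mono n (Nat.zero_le i); rwa [vv_zero] at this

lemma vv_le_one (n i : ℕ) : vv n i ≤ 1 := by
  rcases le_or_gt (3 ^ n) i with h | h
  · rw [vv_ge n i h]
  · calc vv n i ≤ vv n (3 ^ n) := vv_mono n h.le
      _ = 1 := vv_ge n _ le_rfl

lemma vv_refine (n i : ℕ) : ∀ k, vv (n + k) (i * 3 ^ k) = vv n i := by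
  intro k
  induction k with
  | zero => simp
  | succ k ih =>
    have : i * 3 ^ (k+1) = 3 * (i * 3 ^ k) := by ring
    rw [this, show n + (k+1) = (n+k)+1 from rfl, vv3_0, ih]

lemma vv_cross {m i n j : ℕ} (h : (i:ℝ)/3^m ≤ (j:ℝ)/3^n) : vv m i ≤ vv n j := by
  have key : i * 3 ^ n ≤ j * 3 ^ m := by
    have h3m : (0:ℝ) < 3 ^ m := by positivity
    have h3n : (0:ℝ) < 3 ^ n := by positivity
    have : (i:ℝ) * 3 ^ n ≤ (j:ℝ) * 3 ^ m := by
      rw [div_le_div_iff₀ h3m h3n] at h; linarith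
    exact_mod_cast this
  calc vv m i = vv (m + n) (i * 3 ^ n) := (vv_refine m i n).symm
    _ ≤ vv (m + n) (j * 3 ^ m) := vv_mono _ key
    _ = vv (n + m) (j * 3 ^ m) := by rw [add_comm]
    _ = vv n j := vv_refine n j m

noncomputable def fS (x : ℝ) : ℝ :=
  sSup {y | ∃ n i : ℕ, (i:ℝ)/3^n ≤ x ∧ y = vv n i}

lemma fS_bdd (x : ℝ) : BddAbove {y | ∃ n i : ℕ, (i:ℝ)/3^n ≤ x ∧ y = vv n i} :=
  ⟨1, by rintro y ⟨n, i, _, rfl⟩; exact vv_le_one n i⟩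

lemma fS_nonempty {x : ℝ} (hx : 0 ≤ x) :
    Set.Nonempty {y | ∃ n i : ℕ, (i:ℝ)/3^n ≤ x ∧ y = vv n i} :=
  ⟨vv 0 0, 0, 0, by simpa using hx, rfl⟩

lemma fS_le {x : ℝ} {n j : ℕ} (hx : 0 ≤ x) (h : x ≤ (j:ℝ)/3^n) : fS x ≤ vv n j := by
  apply csSup_le (fS_nonempty hx)
  rintro y ⟨m, i, hi, rfl⟩
  exact vv_cross (hi.trans h)

lemma fS_ge {x : ℝ} {n i : ℕ} (h : (i:ℝ)/3^n ≤ x) : vv n i ≤ fS x :=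
  le_csSup (fS_bdd x) ⟨n, i, h, rfl⟩

lemma fS_triadic (n i : ℕ) : fS ((i:ℝ)/3^n) = vv n i :=
  le_antisymm (fS_le (by positivity) le_rfl) (fS_ge le_rfl)

lemma fS_sandwich {x : ℝ} (hx : 0 ≤ x) (n : ℕ) :
    vv n ⌊3^n * x⌋₊ ≤ fS x ∧ fS x ≤ vv n (⌊3^n * x⌋₊ + 1) := by
  have h3 : (0:ℝ) < 3 ^ n := by positivity
  constructor
  · apply fS_ge
    rw [div_le_iff₀ h3, mul_comm]
    exact Nat.floor_le (by positivity)
  · apply fS_le hx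
    rw [le_div_iff₀ h3, mul_comm]
    push_cast
    exact (Nat.lt_floor_add_one _).le

lemma vv_close {n i j : ℕ} (h1 : i ≤ j + 1) (h2 : j ≤ i + 1) :
    |vv n i - vv n j| ≤ (3/7) ^ n := by
  rcases le_total i j with h | h
  · have hij : j ≤ i + 1 := h2
    have l1 : vv n i ≤ vv n j := vv_mono n h
    have l2 : vv n j ≤ vv n (i + 1) := vv_mono n hij
    have := vv_d_le n i
    rw [abs_le]; constructor <;> linarith
  · have hij : i ≤ j + 1 := h1
    have l1 : vv n j ≤ vv n i := vv_mono n h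
    have l2 : vv n i ≤ vv n (j + 1) := vv_mono n hij
    have := vv_d_le n j
    rw [abs_le]; constructor <;> linarith

lemma fS_near {x : ℝ} (hx : 0 ≤ x) (n : ℕ) : |fS x - vv n ⌊3^n * x⌋₊| ≤ (3/7) ^ n := by
  obtain ⟨h1, h2⟩ := fS_sandwich hx n
  have := vv_d_le n ⌊3^n * x⌋₊
  rw [abs_le]; constructor <;> linarith

lemma fS_close {x y : ℝ} (hx : 0 ≤ x) (hy : 0 ≤ y) (n : ℕ) (h : |x - y| ≤ 1/3^n) :
    |fS x - fS y| ≤ 3 * (3/7) ^ n := by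
  set i := ⌊3^n * x⌋₊ with hi
  set j := ⌊3^n * y⌋₊ with hj
  have h3 : (0:ℝ) < 3 ^ n := by positivity
  have hxy : |3^n * x - 3^n * y| ≤ 1 := by
    rw [← mul_sub, abs_mul, abs_of_pos h3]
    calc 3^n * |x - y| ≤ 3^n * (1/3^n) := by
          exact mul_le_mul_of_nonneg_left h h3.le
      _ = 1 := by field_simp
  have lx1 : (i:ℝ) ≤ 3^n * x := Nat.floor_le (by positivity)
  have lx2 : 3^n * x < (i:ℝ) + 1 := Nat.lt_floor_add_one _
  have ly1 : (j:ℝ) ≤ 3^n * y := Nat.floor_le (by positivity)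
  have ly2 : 3^n * y < (j:ℝ) + 1 := Nat.lt_floor_add_one _
  rw [abs_le] at hxy
  have hij1 : i ≤ j + 1 := by
    have : (i:ℝ) < (j:ℝ) + 2 := by linarith
    have : i < j + 2 := by exact_mod_cast this
    omega
  have hij2 : j ≤ i + 1 := by
    have : (j:ℝ) < (i:ℝ) + 2 := by linarith
    have : j < i + 2 := by exact_mod_cast this
    omega
  have e1 := fS_near hx n
  have e2 := fS_near hy n
  have e3 := vv_close (n := n) hij1 hij2
  rw [abs_le] at e1 e2 e3 ⊢
  constructor <;> linarith

lemma fS_contOn : ContinuousOn fS (Set.Icc 0 1) := by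
  rw [Metric.continuousOn_iff]
  intro x hx ε hε
  obtain ⟨n, hn⟩ : ∃ n : ℕ, (3/7:ℝ) ^ n < ε / 4 :=
    exists_pow_lt_of_lt_one (by positivity) (by norm_num)
  refine ⟨1/3^n, by positivity, fun y hy hd => ?_⟩
  rw [Real.dist_eq] at hd ⊢
  calc |fS y - fS x| ≤ 3 * (3/7) ^ n := fS_close hy.1 hx.1 n hd.le
    _ < ε := by linarith

lemma fS_strictMono : StrictMonoOn fS (Set.Icc 0 1) := by
  intro x hx y hy hxy
  obtain ⟨n, hn⟩ : ∃ n : ℕ, (1/3:ℝ) ^ n < (y - x) / 2 :=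
    exists_pow_lt_of_lt_one (by linarith [hxy]) (by norm_num)
  have h3 : (0:ℝ) < 3 ^ n := by positivity
  have hpow : (1/3:ℝ) ^ n = 1 / 3 ^ n := by rw [div_pow]; norm_num
  rw [hpow] at hn
  set i := ⌊3^n * x⌋₊ with hi
  have l1 : (i:ℝ) ≤ 3^n * x := Nat.floor_le (mul_nonneg h3.le hx.1)
  have l2 : 3^n * x < (i:ℝ) + 1 := Nat.lt_floor_add_one _
  rw [div_lt_div_iff₀ h3 (by norm_num : (0:ℝ) < 2)] at hn
  have h2 : 2 < 3^n * (y - x) := by nlinarith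
  have hy1 : ((i:ℝ) + 2) / 3^n ≤ y := by
    rw [div_le_iff₀ h3]
    nlinarith
  have hilt : i + 1 < 3 ^ n := by
    have hy2 : 3^n * y ≤ 3^n := by nlinarith [hy.2]
    have : (i:ℝ) + 2 < (3^n : ℝ) := by nlinarith
    have : ((i + 2 : ℕ) : ℝ) < ((3^n : ℕ) : ℝ) := by push_cast; linarith
    have : i + 2 < 3 ^ n := by exact_mod_cast this
    omega
  have s1 : fS x ≤ vv n (i + 1) := by
    apply fS_le hx.1
    rw [le_div_iff₀ h3]
    push_cast
    nlinarith
  have s2 : vv n (i + 2) ≤ fS y := by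
    apply fS_ge
    have : ((i + 2 : ℕ) : ℝ) = (i:ℝ) + 2 := by push_cast; ring
    rw [this]
    exact hy1
  have s3 : vv n (i + 1) < vv n (i + 2) := by
    have := vv_d_lb n (i+1) hilt
    have hp : (0:ℝ) < (2/7) ^ n := by positivity
    linarith
  linarith

lemma fS_zero : fS 0 = 0 := by
  have := fS_triadic 0 0
  simpa [vv_zero] using this

lemma fS_one : fS 1 = 1 := by
  have h := fS_triadic 0 1
  have h1 : vv 0 1 = 1 := by simp [vv]
  simpa [h1] using h

lemma props_triadic (g : ℝ → ℝ) (hg0 : g 0 = 0) (hg1 : g 1 = 1)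
    (heq : ∀ n : ℕ, ∀ i : ℕ, i < 3 ^ n →
      g ((3 * i + 1) / 3 ^ (n + 1)) = 5 / 7 * g (i / 3 ^ n) + 2 / 7 * g ((i + 1) / 3 ^ n) ∧
      g ((3 * i + 2) / 3 ^ (n + 1)) = 2 / 7 * g (i / 3 ^ n) + 5 / 7 * g ((i + 1) / 3 ^ n)) :
    ∀ n : ℕ, ∀ i : ℕ, i ≤ 3 ^ n → g ((i:ℝ) / 3 ^ n) = vv n i := by
  intro n
  induction n with
  | zero =>
    intro i hi
    interval_cases i
    · simpa [vv_zero] using hg0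
    · have h1 : vv 0 1 = 1 := by simp [vv]
      rw [h1]; simpa using hg1
  | succ n ih =>
    intro j hj
    have hpow : 3 ^ (n+1) = 3 * 3 ^ n := by ring
    set q := j / 3 with hqdef
    have hm : j % 3 = 0 ∨ j % 3 = 1 ∨ j % 3 = 2 := by omega
    have h3 : (0:ℝ) < (3:ℝ) ^ n := by positivity
    rcases hm with h0 | h0 | h0
    · have hj3 : j = 3 * q := by omega
      have hq3 : q ≤ 3 ^ n := by omega
      have hc : ((j:ℕ):ℝ) / 3 ^ (n+1) = (q:ℝ) / 3 ^ n := by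
        rw [hj3]; push_cast; rw [pow_succ]; field_simp
      rw [hj3, vv3_0, ← ih q hq3, ← hc, hj3]
    · have hj3 : j = 3 * q + 1 := by omega
      have hq3 : q < 3 ^ n := by omega
      have e := (heq n q hq3).1
      have c1 : (3 * (q:ℝ) + 1) = ((j:ℕ):ℝ) := by rw [hj3]; push_cast; ring
      have c2 : ((q:ℝ) + 1) = (((q+1:ℕ)):ℝ) := by push_cast; ring
      rw [c1, c2] at e
      rw [e, ih q hq3.le, ih (q+1) hq3, hj3, vv3_1]
    · have hj3 : j = 3 * q + 2 := by omega
      have hq3 : q < 3 ^ n := by omega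
      have e := (heq n q hq3).2
      have c1 : (3 * (q:ℝ) + 2) = ((j:ℕ):ℝ) := by rw [hj3]; push_cast; ring
      have c2 : ((q:ℝ) + 1) = (((q+1:ℕ)):ℝ) := by push_cast; ring
      rw [c1, c2] at e
      rw [e, ih q hq3.le, ih (q+1) hq3, hj3, vv3_2]

lemma fS_eqns : ∀ n : ℕ, ∀ i : ℕ, i < 3 ^ n →
    fS ((3 * i + 1) / 3 ^ (n + 1)) = 5 / 7 * fS ((i:ℝ) / 3 ^ n) + 2 / 7 * fS (((i:ℝ) + 1) / 3 ^ n) ∧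
    fS ((3 * i + 2) / 3 ^ (n + 1)) = 2 / 7 * fS ((i:ℝ) / 3 ^ n) + 5 / 7 * fS (((i:ℝ) + 1) / 3 ^ n) := by
  intro n i _
  have c1 : (3 * (i:ℝ) + 1) = (((3*i+1:ℕ)):ℝ) := by push_cast; ring
  have c2 : (3 * (i:ℝ) + 2) = (((3*i+2:ℕ)):ℝ) := by push_cast; ring
  have c3 : ((i:ℝ) + 1) = (((i+1:ℕ)):ℝ) := by push_cast; ring
  rw [c1, c2, c3, fS_triadic, fS_triadic, fS_triadic, fS_triadic, vv3_1, vv3_2]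
  exact ⟨rfl, rfl⟩

lemma fS_eq_of_props (g : ℝ → ℝ) (hgc : ContinuousOn g (Set.Icc 0 1))
    (hg0 : g 0 = 0) (hg1 : g 1 = 1)
    (heq : ∀ n : ℕ, ∀ i : ℕ, i < 3 ^ n →
      g ((3 * i + 1) / 3 ^ (n + 1)) = 5 / 7 * g (i / 3 ^ n) + 2 / 7 * g ((i + 1) / 3 ^ n) ∧
      g ((3 * i + 2) / 3 ^ (n + 1)) = 2 / 7 * g (i / 3 ^ n) + 5 / 7 * g ((i + 1) / 3 ^ n)) :
    Set.EqOn fS g (Set.Icc 0 1) := by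
  intro x hx
  set t : ℕ → ℝ := fun k => (⌊3^k * x⌋₊ : ℝ) / 3 ^ k with ht
  have h3 : ∀ k : ℕ, (0:ℝ) < 3 ^ k := fun k => by positivity
  have htle : ∀ k, t k ≤ x := by
    intro k
    rw [ht]
    simp only
    rw [div_le_iff₀ (h3 k)]
    have := Nat.floor_le (mul_nonneg (h3 k).le hx.1)
    linarith [this]
  have htmem : ∀ k, t k ∈ Set.Icc (0:ℝ) 1 := by
    intro k
    exact ⟨by positivity, le_trans (htle k) hx.2⟩
  have htt : Filter.Tendsto t Filter.atTop (nhds x) := by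
    have hsq : ∀ k, x - (1/3:ℝ)^k ≤ t k := by
      intro k
      have l2 : 3^k * x < (⌊3^k * x⌋₊:ℝ) + 1 := Nat.lt_floor_add_one _
      rw [ht]; simp only
      rw [le_div_iff₀ (h3 k)]
      have : (1/3:ℝ)^k * 3^k = 1 := by
        rw [div_pow]; field_simp; simp
      nlinarith [h3 k]
    have h1 : Filter.Tendsto (fun k : ℕ => x - (1/3:ℝ)^k) Filter.atTop (nhds x) := by
      have := tendsto_pow_atTop_nhds_zero_of_lt_one (by norm_num : (0:ℝ) ≤ 1/3) (by norm_num : (1/3:ℝ) < 1)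
      simpa using (tendsto_const_nhds (x := x)).sub this
    exact tendsto_of_tendsto_of_tendsto_of_le_of_le h1 tendsto_const_nhds hsq htle
  have httw : Filter.Tendsto t Filter.atTop (nhdsWithin x (Set.Icc 0 1)) :=
    tendsto_nhdsWithin_of_tendsto_nhds_of_eventually_within _ htt
      (Filter.Eventually.of_forall htmem)
  have hfl : Filter.Tendsto (fun k => fS (t k)) Filter.atTop (nhds (fS x)) :=
    ((fS_contOn x hx).tendsto).comp httw
  have hgl : Filter.Tendsto (fun k => g (t k)) Filter.atTop (nhds (g x)) :=
    ((hgc x hx).tendsto).comp httw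
  have hagree : ∀ k, fS (t k) = g (t k) := by
    intro k
    have hfloor : ⌊3^k * x⌋₊ ≤ 3 ^ k := by
      have : (3:ℝ)^k * x ≤ ((3^k : ℕ) : ℝ) := by
        push_cast
        nlinarith [hx.2, h3 k]
      exact le_trans (Nat.floor_le_floor this) (le_of_eq (Nat.floor_natCast _))
    rw [ht]; simp only
    rw [fS_triadic, props_triadic g hg0 hg1 heq k _ hfloor]
  have : Filter.Tendsto (fun k => fS (t k)) Filter.atTop (nhds (g x)) := by
    simpa [funext hagree] using hgl
  exact tendsto_nhds_unique hfl this


/-- There is a unique continuous strictly increasing `f : [0,1] → ℝ` with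
`f(0) = 0`, `f(1) = 1`, satisfying the self-similar identities
`f((3i+1)/3^{n+1}) = (5/7)f(i/3^n) + (2/7)f((i+1)/3^n)` and
`f((3i+2)/3^{n+1}) = (2/7)f(i/3^n) + (5/7)f((i+1)/3^n)`
for all `n ≥ 0` and `0 ≤ i ≤ 3^n − 1`. Uniqueness is expressed as equality
on `[0,1]` of any two functions `ℝ → ℝ` with these properties. -/
theorem stmt_5 :
    ∃ f : ℝ → ℝ,
      (ContinuousOn f (Set.Icc 0 1) ∧ StrictMonoOn f (Set.Icc 0 1) ∧
        f 0 = 0 ∧ f 1 = 1 ∧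
        ∀ n : ℕ, ∀ i : ℕ, i < 3 ^ n →
          f ((3 * i + 1) / 3 ^ (n + 1))
              = 5 / 7 * f (i / 3 ^ n) + 2 / 7 * f ((i + 1) / 3 ^ n) ∧
            f ((3 * i + 2) / 3 ^ (n + 1))
              = 2 / 7 * f (i / 3 ^ n) + 5 / 7 * f ((i + 1) / 3 ^ n)) ∧
      ∀ g : ℝ → ℝ,
        (ContinuousOn g (Set.Icc 0 1) ∧ StrictMonoOn g (Set.Icc 0 1) ∧
          g 0 = 0 ∧ g 1 = 1 ∧
          ∀ n : ℕ, ∀ i : ℕ, i < 3 ^ n →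
            g ((3 * i + 1) / 3 ^ (n + 1))
                = 5 / 7 * g (i / 3 ^ n) + 2 / 7 * g ((i + 1) / 3 ^ n) ∧
              g ((3 * i + 2) / 3 ^ (n + 1))
                = 2 / 7 * g (i / 3 ^ n) + 5 / 7 * g ((i + 1) / 3 ^ n)) →
        Set.EqOn f g (Set.Icc 0 1) := by
  refine ⟨fS, ⟨fS_contOn, fS_strictMono, fS_zero, fS_one, fS_eqns⟩, ?_⟩
  rintro g ⟨hgc, _, hg0, hg1, heq⟩
  exact fS_eq_of_props g hgc hg0 hg1 heq
end
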